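/- As β → ∞, the β-neighbourhoods exhaust the open slab between the perpendicular lines through p and q: if x ∈ ℝ² satisfies ⟨x − p, q − p⟩ > 0 and ⟨x − q, p − q⟩ > 0, then there exists β₀ ≥ 1 such that x ∈ U_β(p,q) for all β ≥ β₀. -/

import Mathlib

noncomputable section
open Metric
abbrev Pt := EuclideanSpace ℝ (Fin 2)
/-- The β-neighbourhood (closed lune) of two planar points. -/
def lune (β : ℝ) (p q : Pt) : Set Pt :=
  closedBall ((1 - β/2) • p + (β/2) • q) (β * dist p q / 2) ∩
  closedBall ((β/2) • p + (1 - β/2) • q) (β * dist p q / 2)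

lemma ball_aux (u v : Pt) (β : ℝ) (ha : 0 < (inner ℝ u v : ℝ))
    (hβ : ‖u‖ ^ 2 / (inner ℝ u v : ℝ) ≤ β) (hβ1 : 1 ≤ β) :
    ‖u - (β / 2) • v‖ ≤ β * ‖v‖ / 2 := by
  have hβ0 : (0 : ℝ) < β := lt_of_lt_of_le one_pos hβ1
  have hr : 0 ≤ β * ‖v‖ / 2 := by positivity
  have hkey : ‖u‖ ^ 2 ≤ β * (inner ℝ u v : ℝ) := by
    rw [div_le_iff₀ ha] at hβ; linarith
  have hsq : ‖u - (β / 2) • v‖ ^ 2 ≤ (β * ‖v‖ / 2) ^ 2 := by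
    rw [norm_sub_sq_real, real_inner_smul_right, norm_smul, Real.norm_eq_abs,
      abs_of_pos (by linarith : (0:ℝ) < β / 2)]
    ring_nf
    nlinarith [norm_nonneg v, sq_nonneg ‖v‖]
  exact (pow_le_pow_iff_left₀ (norm_nonneg _) hr two_ne_zero).mp hsq

set_option maxHeartbeats 1000000 in
theorem lune_exhausts_open_slab (p q : Pt) (hpq : p ≠ q) (x : Pt)
    (h1 : 0 < (inner ℝ (x - p) (q - p) : ℝ)) (h2 : 0 < (inner ℝ (x - q) (p - q) : ℝ)) :
    ∃ β₀ : ℝ, 1 ≤ β₀ ∧ ∀ β : ℝ, β₀ ≤ β → x ∈ lune β p q := by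
  refine ⟨max 1 (max (‖x - p‖ ^ 2 / (inner ℝ (x - p) (q - p) : ℝ))
      (‖x - q‖ ^ 2 / (inner ℝ (x - q) (p - q) : ℝ))), le_max_left _ _, ?_⟩
  intro β hβ
  have hβ1 : 1 ≤ β := le_trans (le_max_left _ _) hβ
  have hβa : ‖x - p‖ ^ 2 / (inner ℝ (x - p) (q - p) : ℝ) ≤ β :=
    le_trans (le_trans (le_max_left _ _) (le_max_right _ _)) hβ
  have hβb : ‖x - q‖ ^ 2 / (inner ℝ (x - q) (p - q) : ℝ) ≤ β :=
    le_trans (le_trans (le_max_right _ _) (le_max_right _ _)) hβ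
  constructor
  · rw [mem_closedBall, dist_eq_norm]
    have he : x - ((1 - β/2) • p + (β/2) • q) = (x - p) - (β/2) • (q - p) := by
      rw [smul_sub, sub_smul, one_smul]; abel
    rw [he, dist_eq_norm p q, norm_sub_rev p q]
    exact ball_aux _ _ _ h1 hβa hβ1
  · rw [mem_closedBall, dist_eq_norm]
    have he : x - ((β/2) • p + (1 - β/2) • q) = (x - q) - (β/2) • (p - q) := by
      rw [smul_sub, sub_smul, one_smul]; abel
    rw [he, dist_eq_norm p q]
    exact ball_aux _ _ _ h2 hβb hβ1
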